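/- Let L be a Dedekind complete unital f-algebra and X a directed partially ordered L-module. Then X is support-attaining if and only if X is almost P-Archimedean. -/

import Mathlib

/-- A Dedekind complete unital `f`-algebra over the reals. -/
class DFAlgebra (L : Type*) extends CommRing L, Lattice L, Algebra ℝ L where
  add_le_add_left : ∀ a b : L, a ≤ b → ∀ c : L, c + a ≤ c + b
  mul_nonneg : ∀ a b : L, 0 ≤ a → 0 ≤ b → 0 ≤ a * b
  f_prop : ∀ a b c : L, a ⊓ b = 0 → 0 ≤ c → (c * a) ⊓ b = 0
  algebraMap_nonneg : ∀ r : ℝ, 0 ≤ r → 0 ≤ algebraMap r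
  dedekind : ∀ S : Set L, S.Nonempty → BddAbove S → ∃ a : L, IsLUB S a

/-- A partially ordered `L`-module. -/
class POModule (L : Type*) [DFAlgebra L] (X : Type*) extends
    AddCommGroup X, Module L X, PartialOrder X where
  add_le_add_left : ∀ a b : X, a ≤ b → ∀ c : X, c + a ≤ c + b
  smul_le_smul : ∀ l : L, 0 ≤ l → ∀ a b : X, a ≤ b → l • a ≤ l • b
/-- X is support-attaining: for every x, the infimum π_x of the idempotents π
with π • x = x satisfies π_x • x = x. -/
def SupportAttaining (L X : Type*) [DFAlgebra L] [POModule L X] : Prop :=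
  ∀ x : X, ∀ s : L, IsGLB {π : L | π * π = π ∧ π • x = x} s → s • x = x

/-- X is almost P-Archimedean. -/
def AlmostPArchimedean (L X : Type*) [DFAlgebra L] [POModule L X] : Prop :=
  ∀ D : Set L, (∀ π ∈ D, π * π = π) → DirectedOn (fun a b => b ≤ a) D → IsGLB D 0 →
    ∀ x : X, 0 ≤ x → ∀ y : X, (∀ π ∈ D, -(π • x) ≤ y ∧ y ≤ π • x) → y = 0

section Aux

variable {L : Type*} [DFAlgebra L]

instance DFAlgebra.covL : CovariantClass L L (· + ·) (· ≤ ·) :=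
  ⟨fun c a b h => DFAlgebra.add_le_add_left a b h c⟩

instance DFAlgebra.covLswap : CovariantClass L L (Function.swap (· + ·)) (· ≤ ·) :=
  ⟨fun c a b h => by
    show a + c ≤ b + c
    rw [add_comm a c, add_comm b c]
    exact DFAlgebra.add_le_add_left a b h c⟩

variable {X : Type*} [POModule L X]

instance POModule.covX : CovariantClass X X (· + ·) (· ≤ ·) :=
  ⟨fun c a b h => POModule.add_le_add_left (L := L) a b h c⟩

instance POModule.covXswap : CovariantClass X X (Function.swap (· + ·)) (· ≤ ·) :=
  ⟨fun c a b h => by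
    show a + c ≤ b + c
    rw [add_comm a c, add_comm b c]
    exact POModule.add_le_add_left (L := L) a b h c⟩

lemma DFAlgebra.mul_le_mul_left' {a b : L} (h : a ≤ b) (c : L) (hc : 0 ≤ c) :
    c * a ≤ c * b := by
  have h1 : 0 ≤ c * (b - a) := DFAlgebra.mul_nonneg c (b - a) hc (sub_nonneg.2 h)
  have h2 : c * (b - a) = c * b - c * a := by ring
  rw [h2] at h1
  exact sub_nonneg.1 h1

lemma DFAlgebra.sq_nonneg (a : L) : 0 ≤ a * a := by
  have hp : 0 ≤ a⁺ := posPart_nonneg a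
  have hn : 0 ≤ a⁻ := negPart_nonneg a
  have h1 : a⁻ ⊓ a⁺ = 0 := by rw [inf_comm]; exact posPart_inf_negPart_eq_zero a
  have h2 : (a⁺ * a⁻) ⊓ a⁺ = 0 := DFAlgebra.f_prop a⁻ a⁺ a⁺ h1 hp
  have h3 : a⁺ ⊓ (a⁺ * a⁻) = 0 := by rw [inf_comm]; exact h2
  have h4 : (a⁻ * a⁺) ⊓ (a⁺ * a⁻) = 0 := DFAlgebra.f_prop a⁺ (a⁺ * a⁻) a⁻ h3 hn
  have h5 : a⁺ * a⁻ = 0 := by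
    have : a⁻ * a⁺ = a⁺ * a⁻ := mul_comm _ _
    rw [this, inf_idem] at h4
    exact h4
  have ha : a = a⁺ - a⁻ := (posPart_sub_negPart a).symm
  have key : a * a = a⁺ * a⁺ + a⁻ * a⁻ - 2 * (a⁺ * a⁻) := by
    linear_combination (a + a⁺ - a⁻) * ha
  rw [key, h5, mul_zero, sub_zero]
  exact add_nonneg (DFAlgebra.mul_nonneg _ _ hp hp) (DFAlgebra.mul_nonneg _ _ hn hn)

lemma DFAlgebra.idem_nonneg {π : L} (h : π * π = π) : 0 ≤ π := h ▸ DFAlgebra.sq_nonneg π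

lemma DFAlgebra.idem_le_one {π : L} (h : π * π = π) : π ≤ 1 := by
  have h1 : (1 - π) * (1 - π) = 1 - π := by linear_combination h
  exact sub_nonneg.1 (DFAlgebra.idem_nonneg h1)

end Aux

/-- A directed PO L-module is support-attaining iff it is almost P-Archimedean. -/
theorem stmt8 (L X : Type*) [DFAlgebra L] [POModule L X]
    (hdir : ∀ x y : X, ∃ z : X, x ≤ z ∧ y ≤ z) :
    SupportAttaining L X ↔ AlmostPArchimedean L X := by
  constructor
  · -- Support-attaining → almost P-Archimedean
    intro hSA D hidem hdirD hglb x hx y hy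
    have hπy : ∀ π ∈ D, π • y = y := by
      intro π hπ
      have hπi := hidem π hπ
      have h1π : (1 - π) * (1 - π) = 1 - π := by linear_combination hπi
      have h1πpos : 0 ≤ 1 - π := DFAlgebra.idem_nonneg h1π
      obtain ⟨hl, hr⟩ := hy π hπ
      have e3 : (1 - π) • (π • x) = (0 : X) := by
        rw [smul_smul]
        have hz : (1 - π) * π = 0 := by linear_combination -hπi
        rw [hz, zero_smul]
      have e1 : (1 - π) • y ≤ 0 := by
        have := POModule.smul_le_smul (1 - π) h1πpos y (π • x) hr
        rwa [e3] at this
      have e2 : (0 : X) ≤ (1 - π) • y := by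
        have := POModule.smul_le_smul (1 - π) h1πpos (-(π • x)) y hl
        rwa [smul_neg, e3, neg_zero] at this
      have e4 : (1 - π) • y = 0 := le_antisymm e1 e2
      have e5 : y - π • y = 0 := by rwa [sub_smul, one_smul] at e4
      have := sub_eq_zero.1 e5
      exact this.symm
    have hglbSy : IsGLB {π : L | π * π = π ∧ π • y = y} 0 := by
      constructor
      · rintro π ⟨h1, _⟩
        exact DFAlgebra.idem_nonneg h1
      · intro b hb
        exact hglb.2 fun π hπ => hb ⟨hidem π hπ, hπy π hπ⟩
    have := hSA y 0 hglbSy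
    rw [zero_smul] at this
    exact this.symm
  · -- Almost P-Archimedean → support-attaining
    intro hAP x s hglb
    set S : Set L := {π : L | π * π = π ∧ π • x = x} with hS
    have h1S : (1 : L) ∈ S := ⟨by ring, one_smul L x⟩
    have hs_le_one : s ≤ 1 := hglb.1 h1S
    have hs_nonneg : 0 ≤ s := hglb.2 fun π hπ => DFAlgebra.idem_nonneg hπ.1
    have hsπ : ∀ π ∈ S, s * π = s := by
      intro π hπ
      have h1πpos : 0 ≤ 1 - π := by
        have h1π : (1 - π) * (1 - π) = 1 - π := by linear_combination hπ.1
        exact DFAlgebra.idem_nonneg h1π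
      have e1 : 0 ≤ s * (1 - π) := DFAlgebra.mul_nonneg s (1 - π) hs_nonneg h1πpos
      have e2 : (1 - π) * s ≤ (1 - π) * π :=
        DFAlgebra.mul_le_mul_left' (hglb.1 hπ) (1 - π) h1πpos
      have e3 : (1 - π) * π = 0 := by linear_combination -hπ.1
      have e4 : s * (1 - π) ≤ 0 := by
        rw [mul_comm]; rw [e3] at e2; exact e2
      have e5 : s * (1 - π) = 0 := le_antisymm e4 e1
      linear_combination -e5
    have hss : s * s = s := by
      have h1spos : 0 ≤ 1 - s := sub_nonneg.2 hs_le_one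
      have e1 : 0 ≤ s * (1 - s) := DFAlgebra.mul_nonneg s (1 - s) hs_nonneg h1spos
      have e2 : ∀ π ∈ S, s * (1 - s) + s ≤ π := by
        intro π hπ
        have h1 : (1 - s) * s ≤ (1 - s) * π :=
          DFAlgebra.mul_le_mul_left' (hglb.1 hπ) (1 - s) h1spos
        have h2 : (1 - s) * π = π - s := by
          have := hsπ π hπ
          linear_combination -this
        rw [h2] at h1
        calc s * (1 - s) + s = (1 - s) * s + s := by ring
          _ ≤ (π - s) + s := add_le_add_left h1 s
          _ = π := by ring
      have e3 : s * (1 - s) + s ≤ s := hglb.2 fun π hπ => e2 π hπ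
      have e4 : s * (1 - s) ≤ 0 := add_le_iff_nonpos_left.1 e3
      have e5 : s * (1 - s) = 0 := le_antisymm e4 e1
      linear_combination -e5
    set D : Set L := {e : L | ∃ π ∈ S, e = π - s} with hD
    have hDidem : ∀ e ∈ D, e * e = e := by
      rintro e ⟨π, hπ, rfl⟩
      linear_combination hπ.1 + hss - 2 * (hsπ π hπ)
    have hDdir : DirectedOn (fun a b => b ≤ a) D := by
      rintro e1 ⟨π, hπ, rfl⟩ e2 ⟨ρ, hρ, rfl⟩
      have hπρ : π * ρ ∈ S := by
        constructor
        · linear_combination ρ * ρ * hπ.1 + π * hρ.1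
        · rw [mul_smul, hρ.2, hπ.2]
      refine ⟨π * ρ - s, ⟨π * ρ, hπρ, rfl⟩, ?_, ?_⟩
      · have : π * ρ ≤ π := by
          have := DFAlgebra.mul_le_mul_left' (DFAlgebra.idem_le_one hρ.1) π
            (DFAlgebra.idem_nonneg hπ.1)
          rwa [mul_one] at this
        exact sub_le_sub_right this s
      · have : π * ρ ≤ ρ := by
          have := DFAlgebra.mul_le_mul_left' (DFAlgebra.idem_le_one hπ.1) ρ
            (DFAlgebra.idem_nonneg hρ.1)
          rw [mul_one] at this
          rw [mul_comm]
          exact this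
        exact sub_le_sub_right this s
    have hDglb : IsGLB D 0 := by
      constructor
      · rintro e ⟨π, hπ, rfl⟩
        exact sub_nonneg.2 (hglb.1 hπ)
      · intro b hb
        have hbs : b + s ∈ lowerBounds S := by
          intro π hπ
          have := hb ⟨π, hπ, rfl⟩
          exact le_sub_iff_add_le.1 this
        exact add_le_iff_nonpos_left.1 (hglb.2 hbs)
    obtain ⟨w, hw1, hw2⟩ := hdir x (-x)
    have hw0 : (0 : X) ≤ w := by
      have h2w : (0 : X) ≤ w + w := by
        calc (0 : X) = x + (-x) := by abel
        _ ≤ w + w := add_le_add hw1 hw2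
      have hh : (0 : ℝ) ≤ (1 / 2 : ℝ) := by norm_num
      have hh' : 0 ≤ algebraMap ℝ L (1 / 2) := DFAlgebra.algebraMap_nonneg _ hh
      have key := POModule.smul_le_smul (algebraMap ℝ L (1 / 2)) hh' 0 (w + w) h2w
      rw [smul_zero] at key
      have heq : (algebraMap ℝ L (1 / 2)) • (w + w) = w := by
        rw [smul_add, ← add_smul, ← map_add]
        norm_num
      rwa [heq] at key
    set y : X := x - s • x with hy
    have hsand : ∀ e ∈ D, -(e • w) ≤ y ∧ y ≤ e • w := by
      rintro e ⟨π, hπ, rfl⟩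
      have hepos : 0 ≤ π - s := sub_nonneg.2 (hglb.1 hπ)
      have hex : (π - s) • x = y := by rw [sub_smul, hπ.2]
      constructor
      · have hnw : -w ≤ x := by
          rw [neg_le]; exact hw2
        have := POModule.smul_le_smul (π - s) hepos (-w) x hnw
        rw [smul_neg, hex] at this
        exact this
      · have := POModule.smul_le_smul (π - s) hepos x w hw1
        rw [hex] at this
        exact this
    have hy0 : y = 0 := hAP D hDidem hDdir hDglb w hw0 y hsand
    have : x - s • x = 0 := hy0
    have := sub_eq_zero.1 this
    exact this.symm
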